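/- Let x_1, …, x_n ∈ ℝ^p be pairwise distinct vectors and define the n×n matrix A with entries A_{ij} = Σ_{r=1}^n A^{(r)}_{ij}, where A^{(r)}_{ij} is the (normalized) solid angle measure of the set of directions g ∈ S^{p−1} such that both x_i' g ≤ x_r' g and x_j' g ≤ x_r' g. Then A is symmetric positive definite. -/

import Mathlib

open MeasureTheory Set Metric
open scoped RealInnerProductSpace ENNReal NNReal

noncomputable section
set_option maxHeartbeats 1000000


lemma vol_le_hausdorff (m : ℕ) (s : Set (EuclideanSpace ℝ (Fin m))) (hs : MeasurableSet s) :
    volume s ≤ μH[(m:ℝ)] s := by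
  have hpi : (μH[(m:ℝ)] : Measure (Fin m → ℝ)) = volume := by
    have h := hausdorffMeasure_pi_real (ι := Fin m)
    rw [Fintype.card_fin] at h; exact_mod_cast h
  have h1 : LipschitzWith 1 (WithLp.equiv 2 (Fin m → ℝ)) := PiLp.lipschitzWith_ofLp 2 _
  have him := h1.hausdorffMeasure_image_le (by positivity : (0:ℝ) ≤ (m:ℝ)) s
  have himg : (WithLp.equiv 2 (Fin m → ℝ)) '' s
      = (MeasurableEquiv.toLp 2 (Fin m → ℝ)) ⁻¹' s := by
    exact Equiv.image_eq_preimage_symm _ _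
  have hvol : volume ((WithLp.equiv 2 (Fin m → ℝ)) '' s) = volume s := by
    rw [himg]
    exact (PiLp.volume_preserving_toLp (Fin m)).measure_preimage
      hs.nullMeasurableSet
  calc volume s = μH[(m:ℝ)] ((WithLp.equiv 2 (Fin m → ℝ)) '' s) := by rw [hpi, hvol]
    _ ≤ (1:ℝ≥0∞)^(m:ℝ) * μH[(m:ℝ)] s := him
    _ = μH[(m:ℝ)] s := by simp

lemma hausdorff_le_vol (m : ℕ) : ∃ C : ℝ≥0∞, C ≠ ∞ ∧ ∀ s : Set (EuclideanSpace ℝ (Fin m)),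
    MeasurableSet s → μH[(m:ℝ)] s ≤ C * volume s := by
  have hpi : (μH[(m:ℝ)] : Measure (Fin m → ℝ)) = volume := by
    have h := hausdorffMeasure_pi_real (ι := Fin m)
    rw [Fintype.card_fin] at h; exact_mod_cast h
  have h2 : AntilipschitzWith ((Fintype.card (Fin m) : ℝ≥0) ^ (1/(2:ℝ≥0∞)).toReal)
      (WithLp.equiv 2 (Fin m → ℝ)) := PiLp.antilipschitzWith_ofLp 2 _
  refine ⟨((Fintype.card (Fin m) : ℝ≥0) ^ (1/(2:ℝ≥0∞)).toReal : ℝ≥0)^(m:ℝ), ?_, fun s hs => ?_⟩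
  · exact (ENNReal.rpow_lt_top_of_nonneg (by positivity) ENNReal.coe_ne_top).ne
  · have := h2.le_hausdorffMeasure_image (by positivity : (0:ℝ) ≤ (m:ℝ)) s
    refine this.trans ?_
    gcongr
    have himg : (WithLp.equiv 2 (Fin m → ℝ)) '' s
        = (MeasurableEquiv.toLp 2 (Fin m → ℝ)) ⁻¹' s := by
      exact Equiv.image_eq_preimage_symm _ _
    rw [hpi, himg]
    exact le_of_eq ((PiLp.volume_preserving_toLp (Fin m)).measure_preimage
      hs.nullMeasurableSet)

lemma vol_sphere_zero (m : ℕ) : volume (sphere (0 : EuclideanSpace ℝ (Fin m)) 1) = 0 := by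
  cases m with
  | zero =>
    have : sphere (0 : EuclideanSpace ℝ (Fin 0)) 1 = ∅ := by
      ext x
      have hx : x = 0 := Subsingleton.elim _ _
      simp [hx]
    simp [this]
  | succ k =>
    haveI : Nontrivial (EuclideanSpace ℝ (Fin (k+1))) := by
      refine ⟨0, EuclideanSpace.single 0 1, fun h => ?_⟩
      have := congrArg norm h
      rw [norm_zero, EuclideanSpace.norm_single] at this
      norm_num at this
    exact Measure.addHaar_sphere (μ := volume) 0 1

lemma subspace_transfer {p m : ℕ} (W : Submodule ℝ (EuclideanSpace ℝ (Fin p)))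
    (hW : Module.finrank ℝ W = m) (T : Set (EuclideanSpace ℝ (Fin p)))
    (hT : T ⊆ (W : Set (EuclideanSpace ℝ (Fin p)))) :
    ∃ U : Set (EuclideanSpace ℝ (Fin m)), μH[(m:ℝ)] T = μH[(m:ℝ)] U ∧
      (∀ R, T ⊆ closedBall 0 R → U ⊆ closedBall 0 R) ∧
      (T ⊆ sphere 0 1 → U ⊆ sphere 0 1) := by
  subst hW
  set L := (stdOrthonormalBasis ℝ W).repr
  set s : Set W := (Subtype.val) ⁻¹' T
  refine ⟨L '' s, ?_, ?_, ?_⟩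
  · have h1 : T = (Subtype.val : W → _) '' s := by
      rw [Set.image_preimage_eq_of_subset]
      rwa [Subtype.range_coe]
    rw [h1, (isometry_subtype_coe).hausdorffMeasure_image (Or.inl (Nat.cast_nonneg _)),
      (L.isometry).hausdorffMeasure_image (Or.inl (Nat.cast_nonneg _))]
  · rintro R hR _ ⟨w, hw, rfl⟩
    rw [mem_closedBall_zero_iff, L.norm_map]
    have := hR hw
    rwa [mem_closedBall_zero_iff] at this
  · rintro hR _ ⟨w, hw, rfl⟩
    rw [mem_sphere_zero_iff_norm, L.norm_map]
    have := hR hw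
    rwa [mem_sphere_zero_iff_norm] at this

lemma orth_finrank {p : ℕ} (hp : 1 ≤ p) (v : EuclideanSpace ℝ (Fin p)) (hv : v ≠ 0) :
    Module.finrank ℝ ((ℝ ∙ v)ᗮ : Submodule ℝ (EuclideanSpace ℝ (Fin p))) = p - 1 := by
  have h1 : Module.finrank ℝ (ℝ ∙ v : Submodule ℝ (EuclideanSpace ℝ (Fin p))) = 1 :=
    finrank_span_singleton hv
  have h2 := Submodule.finrank_add_finrank_orthogonal (K := (ℝ ∙ v :
    Submodule ℝ (EuclideanSpace ℝ (Fin p))))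
  rw [h1, finrank_euclideanSpace_fin] at h2
  omega

lemma cast_sub_one {p : ℕ} (hp : 1 ≤ p) : (p:ℝ) - 1 = ((p-1:ℕ):ℝ) := by
  rw [Nat.cast_sub hp]; norm_num

lemma hausdorff_subspace_bounded {p : ℕ} (hp : 1 ≤ p) (v : EuclideanSpace ℝ (Fin p))
    (hv : v ≠ 0) (T : Set (EuclideanSpace ℝ (Fin p)))
    (hT : T ⊆ ((ℝ ∙ v)ᗮ : Submodule ℝ (EuclideanSpace ℝ (Fin p))))
    (hb : Bornology.IsBounded T) : μH[(p:ℝ)-1] T < ∞ := by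
  rw [cast_sub_one hp]
  obtain ⟨U, hU1, hU2, -⟩ := subspace_transfer _ (orth_finrank hp v hv) T hT
  obtain ⟨R, hR⟩ := hb.subset_closedBall 0
  obtain ⟨C, hC, hCle⟩ := hausdorff_le_vol (p-1)
  calc μH[((p-1:ℕ):ℝ)] T = μH[((p-1:ℕ):ℝ)] U := hU1
    _ ≤ μH[((p-1:ℕ):ℝ)] (closedBall 0 R) := measure_mono (hU2 R hR)
    _ ≤ C * volume (closedBall 0 R) := hCle _ measurableSet_closedBall
    _ < ∞ := ENNReal.mul_lt_top hC.lt_top measure_closedBall_lt_top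

lemma hausdorff_sphere_cap_null {p : ℕ} (hp : 1 ≤ p) (v : EuclideanSpace ℝ (Fin p))
    (hv : v ≠ 0) (T : Set (EuclideanSpace ℝ (Fin p)))
    (hT : T ⊆ ((ℝ ∙ v)ᗮ : Submodule ℝ (EuclideanSpace ℝ (Fin p))))
    (hsph : T ⊆ sphere 0 1) : μH[(p:ℝ)-1] T = 0 := by
  rw [cast_sub_one hp]
  obtain ⟨U, hU1, -, hU3⟩ := subspace_transfer _ (orth_finrank hp v hv) T hT
  obtain ⟨C, hC, hCle⟩ := hausdorff_le_vol (p-1)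
  refine le_antisymm ?_ zero_le
  calc μH[((p-1:ℕ):ℝ)] T = μH[((p-1:ℕ):ℝ)] U := hU1
    _ ≤ μH[((p-1:ℕ):ℝ)] (sphere 0 1) := measure_mono (hU3 hsph)
    _ ≤ C * volume (sphere (0 : EuclideanSpace ℝ (Fin (p-1))) 1) := hCle _ (isClosed_sphere.measurableSet)
    _ = 0 := by rw [vol_sphere_zero]; simp

lemma lipschitzOnWith_normalize {E : Type*} [NormedAddCommGroup E] [NormedSpace ℝ E] :
    LipschitzOnWith 2 (fun x : E => ‖x‖⁻¹ • x) {x : E | 1 ≤ ‖x‖} := by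
  refine LipschitzOnWith.of_dist_le_mul fun x hx y hy => ?_
  simp only [Set.mem_setOf_eq] at hx hy
  have ha : (0:ℝ) < ‖x‖ := lt_of_lt_of_le one_pos hx
  have hb : (0:ℝ) < ‖y‖ := lt_of_lt_of_le one_pos hy
  set a := ‖x‖
  set b := ‖y‖
  set d := ‖x - y‖ with hd
  have habd : |b - a| ≤ d := by
    rw [hd]
    have := abs_norm_sub_norm_le y x
    rwa [norm_sub_rev] at this
  have key : ‖a⁻¹ • x - b⁻¹ • y‖ ≤ a⁻¹ * d + |a⁻¹ - b⁻¹| * b := by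
    have hsplit : a⁻¹ • x - b⁻¹ • y = a⁻¹ • (x - y) + (a⁻¹ - b⁻¹) • y := by
      rw [smul_sub, sub_smul]; abel
    rw [hsplit]
    refine (norm_add_le _ _).trans ?_
    rw [norm_smul, norm_smul, Real.norm_eq_abs, Real.norm_eq_abs,
      abs_of_pos (inv_pos.mpr ha)]
  have h2 : |a⁻¹ - b⁻¹| * b ≤ d := by
    have e1 : a⁻¹ - b⁻¹ = (b - a) * (a⁻¹ * b⁻¹) := by field_simp
    rw [e1, abs_mul, abs_of_pos (mul_pos (inv_pos.mpr ha) (inv_pos.mpr hb))]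
    have : |b - a| * (a⁻¹ * b⁻¹) * b = |b - a| * a⁻¹ := by field_simp
    rw [this]
    calc |b - a| * a⁻¹ ≤ |b - a| * 1 := by
          gcongr
          rw [inv_le_one_iff₀]; right; exact hx
      _ = |b - a| := mul_one _
      _ ≤ d := habd
  have h3 : a⁻¹ * d ≤ d := by
    have hinv : a⁻¹ ≤ 1 := by rw [inv_le_one_iff₀]; right; exact hx
    have := mul_le_mul_of_nonneg_right hinv (norm_nonneg (x - y))
    rw [one_mul] at this
    exact this
  rw [dist_eq_norm, dist_eq_norm]
  push_cast
  calc ‖a⁻¹ • x - b⁻¹ • y‖ ≤ a⁻¹ * d + |a⁻¹ - b⁻¹| * b := key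
    _ ≤ d + d := add_le_add h3 h2
    _ = 2 * ‖x - y‖ := by rw [hd]; ring

lemma hausdorff_affine_bounded {p : ℕ} (hp : 1 ≤ p) (v : EuclideanSpace ℝ (Fin p))
    (hv : v ≠ 0) (c : ℝ) (T : Set (EuclideanSpace ℝ (Fin p)))
    (hT : T ⊆ {x | ⟪v, x⟫ = c}) (hb : Bornology.IsBounded T) : μH[(p:ℝ)-1] T < ∞ := by
  set x₀ : EuclideanSpace ℝ (Fin p) := (c / ‖v‖^2) • v with hx₀
  have hvx₀ : ⟪v, x₀⟫ = c := by
    rw [hx₀, real_inner_smul_right, real_inner_self_eq_norm_sq]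
    have : ‖v‖ ≠ 0 := norm_ne_zero_iff.mpr hv
    field_simp
  have hiso : Isometry (fun x : EuclideanSpace ℝ (Fin p) => x - x₀) :=
    Isometry.of_dist_eq fun a b => by
      rw [dist_eq_norm, dist_eq_norm, sub_sub_sub_cancel_right]
  set T' := (fun x : EuclideanSpace ℝ (Fin p) => x - x₀) '' T with hT'
  have heq : μH[(p:ℝ)-1] T' = μH[(p:ℝ)-1] T :=
    hiso.hausdorffMeasure_image (Or.inl (by
      have : (1:ℝ) ≤ (p:ℝ) := by exact_mod_cast hp
      linarith)) T
  have hsub : T' ⊆ ((ℝ ∙ v)ᗮ : Submodule ℝ (EuclideanSpace ℝ (Fin p))) := by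
    rintro _ ⟨y, hy, rfl⟩
    have : ⟪v, y - x₀⟫ = 0 := by
      rw [inner_sub_right, hvx₀, hT hy, sub_self]
    exact Submodule.mem_orthogonal_singleton_iff_inner_right.mpr this
  have hb' : Bornology.IsBounded T' := by
    obtain ⟨R, hR⟩ := hb.subset_closedBall 0
    refine (isBounded_closedBall (x := (0:EuclideanSpace ℝ (Fin p))) (r := R + ‖x₀‖)).subset ?_
    rintro _ ⟨y, hy, rfl⟩
    rw [mem_closedBall_zero_iff]
    have h1 : ‖y‖ ≤ R := mem_closedBall_zero_iff.mp (hR hy)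
    calc ‖y - x₀‖ ≤ ‖y‖ + ‖x₀‖ := norm_sub_le _ _
      _ ≤ R + ‖x₀‖ := by gcongr
  rw [← heq]
  exact hausdorff_subspace_bounded hp v hv T' hsub hb'

lemma abs_coord_le_norm {p : ℕ} (x : EuclideanSpace ℝ (Fin p)) (k : Fin p) : |x k| ≤ ‖x‖ := by
  have h := abs_real_inner_le_norm (EuclideanSpace.single k (1:ℝ)) x
  rw [EuclideanSpace.inner_single_left] at h
  simpa [EuclideanSpace.norm_single] using h

lemma hausdorff_sphere_lt_top {p : ℕ} (hp : 1 ≤ p) :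
    μH[(p:ℝ)-1] (sphere (0 : EuclideanSpace ℝ (Fin p)) 1) < ∞ := by
  classical
  haveI : Nonempty (Fin p) := ⟨⟨0, by omega⟩⟩
  set B : Set (EuclideanSpace ℝ (Fin p)) :=
    {x | (∀ j, |x j| ≤ 1) ∧ ∃ k, |x k| = 1} with hB
  have hBnorm : B ⊆ {x : EuclideanSpace ℝ (Fin p) | 1 ≤ ‖x‖} := by
    rintro x ⟨-, k, hk⟩
    exact le_trans (le_of_eq hk.symm) (abs_coord_le_norm x k)
  have hd0 : (0:ℝ) ≤ (p:ℝ) - 1 := by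
    have : (1:ℝ) ≤ (p:ℝ) := by exact_mod_cast hp
    linarith
  -- sphere ⊆ image of B under normalization
  have hsub : sphere (0 : EuclideanSpace ℝ (Fin p)) 1 ⊆ (fun x => ‖x‖⁻¹ • x) '' B := by
    intro x hx
    rw [mem_sphere_zero_iff_norm] at hx
    obtain ⟨k0, -, hk0⟩ := Finset.exists_max_image Finset.univ (fun j => |x j|)
      ⟨Classical.arbitrary _, Finset.mem_univ _⟩
    set M := |x k0| with hM
    have hMpos : 0 < M := by
      rcases (abs_nonneg (x k0)).lt_or_eq with h | h
      · exact h
      · exfalso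
        have hx0 : x = 0 := by
          ext j
          have hj : |x j| ≤ M := hk0 j (Finset.mem_univ j)
          have hM0 : M = 0 := h.symm
          rw [hM0] at hj
          have hz : x j = 0 := abs_eq_zero.mp (le_antisymm hj (abs_nonneg _))
          simpa using hz
        rw [hx0, norm_zero] at hx
        norm_num at hx
    refine ⟨M⁻¹ • x, ⟨fun j => ?_, ⟨k0, ?_⟩⟩, ?_⟩
    · have heq : (M⁻¹ • x) j = M⁻¹ * x j := rfl
      rw [heq, abs_mul, abs_inv, abs_of_pos hMpos]
      calc M⁻¹ * |x j| ≤ M⁻¹ * M := by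
            gcongr
            exact hk0 j (Finset.mem_univ j)
        _ = 1 := inv_mul_cancel₀ hMpos.ne'
    · have : (M⁻¹ • x) k0 = M⁻¹ * x k0 := rfl
      rw [this, abs_mul, abs_inv, abs_of_pos hMpos, inv_mul_cancel₀ hMpos.ne']
    · have hnorm : ‖M⁻¹ • x‖ = M⁻¹ := by
        rw [norm_smul, Real.norm_eq_abs, abs_inv, abs_of_pos hMpos, hx, mul_one]
      simp only
      rw [hnorm, inv_inv, smul_smul, mul_inv_cancel₀ hMpos.ne', one_smul]
  have him := (lipschitzOnWith_normalize.mono hBnorm).hausdorffMeasure_image_le hd0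
  have hBfin : μH[(p:ℝ)-1] B < ∞ := by
    have hBsub : B ⊆ ⋃ k : Fin p,
        ({x : EuclideanSpace ℝ (Fin p) | x k = 1 ∧ ∀ j, |x j| ≤ 1} ∪
         {x : EuclideanSpace ℝ (Fin p) | x k = -1 ∧ ∀ j, |x j| ≤ 1}) := by
      rintro x ⟨hall, k, hk⟩
      refine Set.mem_iUnion.mpr ⟨k, ?_⟩
      rcases abs_eq (by norm_num : (0:ℝ) ≤ 1) |>.mp hk with h | h
      · exact Or.inl ⟨h, hall⟩
      · exact Or.inr ⟨h, hall⟩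
    have hface : ∀ (k : Fin p) (e : ℝ), e = 1 ∨ e = -1 →
        μH[(p:ℝ)-1] {x : EuclideanSpace ℝ (Fin p) | x k = e ∧ ∀ j, |x j| ≤ 1} < ∞ := by
      intro k e _
      refine hausdorff_affine_bounded hp (EuclideanSpace.single k (1:ℝ)) ?_ e _ ?_ ?_
      · intro h
        have := congrArg norm h
        rw [EuclideanSpace.norm_single, norm_zero] at this
        norm_num at this
      · intro x hx
        rw [Set.mem_setOf_eq, EuclideanSpace.inner_single_left]
        simpa using hx.1
      · refine (isBounded_closedBall (x := (0:EuclideanSpace ℝ (Fin p))) (r := p)).subset ?_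
        intro x hx
        rw [mem_closedBall_zero_iff]
        have h1 : ‖x‖ ≤ Real.sqrt p := by
          rw [EuclideanSpace.norm_eq]
          refine Real.sqrt_le_sqrt ?_
          calc (∑ i, ‖x i‖^2) ≤ ∑ _i : Fin p, (1:ℝ) := by
                refine Finset.sum_le_sum fun i _ => ?_
                have := hx.2 i
                rw [Real.norm_eq_abs]
                nlinarith [abs_nonneg (x i)]
            _ = p := by simp
        refine h1.trans ?_
        nlinarith [Real.sq_sqrt (by positivity : (0:ℝ) ≤ (p:ℝ)), Real.sqrt_nonneg (p:ℝ),
          (by exact_mod_cast hp : (1:ℝ) ≤ (p:ℝ))]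
    calc μH[(p:ℝ)-1] B ≤ ∑ k : Fin p,
          μH[(p:ℝ)-1] ({x : EuclideanSpace ℝ (Fin p) | x k = 1 ∧ ∀ j, |x j| ≤ 1} ∪
            {x : EuclideanSpace ℝ (Fin p) | x k = -1 ∧ ∀ j, |x j| ≤ 1}) :=
        le_trans (measure_mono hBsub) (measure_iUnion_fintype_le _ _)
      _ < ∞ := by
        refine ENNReal.sum_lt_top.mpr fun k _ => ?_
        refine lt_of_le_of_lt (measure_union_le _ _) (ENNReal.add_lt_top.mpr ⟨?_, ?_⟩)
        · exact hface k 1 (Or.inl rfl)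
        · exact hface k (-1) (Or.inr rfl)
  calc μH[(p:ℝ)-1] (sphere (0 : EuclideanSpace ℝ (Fin p)) 1)
      ≤ μH[(p:ℝ)-1] ((fun x : EuclideanSpace ℝ (Fin p) => ‖x‖⁻¹ • x) '' B) :=
        measure_mono hsub
    _ ≤ (2:ℝ≥0∞)^((p:ℝ)-1) * μH[(p:ℝ)-1] B := by simpa using him
    _ < ∞ := ENNReal.mul_lt_top (by
        exact ENNReal.rpow_lt_top_of_nonneg hd0 (by norm_num)) hBfin

lemma hausdorff_sphere_pos {p : ℕ} (hp : 1 ≤ p) :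
    0 < μH[(p:ℝ)-1] (sphere (0 : EuclideanSpace ℝ (Fin p)) 1) := by
  classical
  obtain ⟨k⟩ : Nonempty (Fin p) := ⟨⟨0, by omega⟩⟩
  have hvnorm : ‖(EuclideanSpace.single k (1:ℝ))‖ = 1 := by
    rw [EuclideanSpace.norm_single]; norm_num
  set v : EuclideanSpace ℝ (Fin p) := EuclideanSpace.single k (1:ℝ) with hvdef
  have hv : v ≠ 0 := by intro h; rw [h, norm_zero] at hvnorm; norm_num at hvnorm
  set W : Submodule ℝ (EuclideanSpace ℝ (Fin p)) := (ℝ ∙ v)ᗮ with hWdef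
  set m : ℕ := Module.finrank ℝ W with hm
  have hmrank : m = p - 1 := orth_finrank hp v hv
  set L := (stdOrthonormalBasis ℝ W).repr with hL
  set f : EuclideanSpace ℝ (Fin p) → EuclideanSpace ℝ (Fin m) :=
    fun g => L ((Submodule.orthogonalProjectionOnto W) g) with hfdef
  have hf : LipschitzWith 1 f := by
    refine LipschitzWith.of_dist_le_mul fun a b => ?_
    have h0 : dist (f a) (f b) = ‖((Submodule.orthogonalProjectionOnto W) a : W) - (Submodule.orthogonalProjectionOnto W) b‖ := by
      rw [hfdef]; simp only; rw [L.isometry.dist_eq, dist_eq_norm]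
    rw [h0, ← map_sub]
    calc ‖(Submodule.orthogonalProjectionOnto W) (a - b)‖
        ≤ ‖(Submodule.orthogonalProjectionOnto W : EuclideanSpace ℝ (Fin p) →L[ℝ] W)‖ * ‖a - b‖ :=
          ContinuousLinearMap.le_opNorm _ _
      _ ≤ 1 * ‖a - b‖ := by
          gcongr
          exact Submodule.orthogonalProjectionOnto_norm_le W
      _ = (1:ℝ≥0) * dist a b := by rw [dist_eq_norm]; norm_num
  have hsub : closedBall (0 : EuclideanSpace ℝ (Fin m)) 1 ⊆
      f '' (sphere (0 : EuclideanSpace ℝ (Fin p)) 1) := by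
    intro u hu
    rw [mem_closedBall_zero_iff] at hu
    set w : W := L.symm u with hw
    have hwn : ‖w‖ ≤ 1 := by rw [hw, L.symm.norm_map]; exact hu
    have hvW : v ∈ Wᗮ := by
      rw [hWdef, Submodule.orthogonal_orthogonal]
      exact Submodule.mem_span_singleton_self v
    have hvw : ⟪v, (w : EuclideanSpace ℝ (Fin p))⟫ = 0 :=
      Submodule.mem_orthogonal_singleton_iff_inner_right.mp w.2
    set t : ℝ := Real.sqrt (1 - ‖w‖^2) with ht
    set g : EuclideanSpace ℝ (Fin p) := (w : EuclideanSpace ℝ (Fin p)) + t • v with hg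
    have hinner : ⟪(w : EuclideanSpace ℝ (Fin p)), t • v⟫ = 0 := by
      rw [real_inner_smul_right, real_inner_comm, hvw, mul_zero]
    have hwnorm : ‖(w : EuclideanSpace ℝ (Fin p))‖ = ‖w‖ := rfl
    have hgnorm : ‖g‖ = 1 := by
      have h2 : ‖t • v‖^2 = 1 - ‖w‖^2 := by
        rw [norm_smul, hvnorm, mul_one, Real.norm_eq_abs, sq_abs, ht,
          Real.sq_sqrt (by nlinarith [norm_nonneg w])]
      have h1 : ‖g‖^2 = 1 := by
        rw [hg, norm_add_sq_real, hinner, h2, hwnorm]; ring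
      nlinarith [norm_nonneg g]
    refine ⟨g, ?_, ?_⟩
    · rwa [mem_sphere_zero_iff_norm]
    · have h1 : (Submodule.orthogonalProjectionOnto W) (w : EuclideanSpace ℝ (Fin p)) = w :=
        Submodule.orthogonalProjectionOnto_mem_subspace_eq_self w
      have h2 : (Submodule.orthogonalProjectionOnto W) (t • v) = 0 := by
        rw [_root_.map_smul, Submodule.orthogonalProjectionOnto_apply_of_mem_orthogonal hvW,
          smul_zero]
      have hproj : (Submodule.orthogonalProjectionOnto W) g = w := by
        rw [hg, map_add, h1, h2, add_zero]
      rw [hfdef]; simp only; rw [hproj, hw, L.apply_symm_apply]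
  have h1 : (0:ℝ≥0∞) < volume (closedBall (0 : EuclideanSpace ℝ (Fin m)) 1) :=
    measure_closedBall_pos _ _ one_pos
  have h2 := vol_le_hausdorff m (closedBall 0 1) measurableSet_closedBall
  have h3 : μH[(m:ℝ)] (closedBall (0 : EuclideanSpace ℝ (Fin m)) 1) ≤
      μH[(m:ℝ)] (f '' (sphere (0 : EuclideanSpace ℝ (Fin p)) 1)) := measure_mono hsub
  have h4 := hf.hausdorffMeasure_image_le (Nat.cast_nonneg m)
    (sphere (0 : EuclideanSpace ℝ (Fin p)) 1)
  have hd : (p:ℝ) - 1 = (m:ℝ) := by rw [cast_sub_one hp, hmrank]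
  rw [hd]
  calc (0:ℝ≥0∞) < volume (closedBall (0 : EuclideanSpace ℝ (Fin m)) 1) := h1
    _ ≤ μH[(m:ℝ)] (closedBall (0 : EuclideanSpace ℝ (Fin m)) 1) := h2
    _ ≤ μH[(m:ℝ)] (f '' (sphere (0 : EuclideanSpace ℝ (Fin p)) 1)) := h3
    _ ≤ (1:ℝ≥0∞)^(m:ℝ) * μH[(m:ℝ)] (sphere (0 : EuclideanSpace ℝ (Fin p)) 1) := h4
    _ = μH[(m:ℝ)] (sphere (0 : EuclideanSpace ℝ (Fin p)) 1) := by simp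

lemma comb {n : ℕ} (t : Fin n → ℝ) (tinj : Function.Injective t) (c : Fin n → ℝ)
    (h : ∀ r, ∑ i ∈ Finset.univ.filter (fun i => t i ≤ t r), c i = 0) : ∀ j, c j = 0 := by
  intro j
  have hlt : ∑ i ∈ Finset.univ.filter (fun i => t i < t j), c i = 0 := by
    rcases (Finset.univ.filter (fun i => t i < t j)).eq_empty_or_nonempty with he | hne
    · rw [he]; simp
    · obtain ⟨r, hr, hrmax⟩ := Finset.exists_max_image _ t hne
      have hrlt : t r < t j := by
        simpa using (Finset.mem_filter.mp hr).2
      have hset : Finset.univ.filter (fun i => t i < t j)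
          = Finset.univ.filter (fun i => t i ≤ t r) := by
        ext i
        simp only [Finset.mem_filter, Finset.mem_univ, true_and]
        constructor
        · intro hi
          exact hrmax i (by simp [hi])
        · intro hi
          exact lt_of_le_of_lt hi hrlt
      rw [hset]; exact h r
  have hj : j ∉ Finset.univ.filter (fun i => t i < t j) := by simp
  have hsplit : Finset.univ.filter (fun i => t i ≤ t j)
      = insert j (Finset.univ.filter (fun i => t i < t j)) := by
    ext i
    simp only [Finset.mem_filter, Finset.mem_insert, Finset.mem_univ, true_and]
    constructor
    · intro hi
      rcases eq_or_ne i j with h' | h'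
      · exact Or.inl h'
      · exact Or.inr (lt_of_le_of_ne hi (fun he => h' (tinj he)))
    · rintro (rfl | hi)
      · exact le_refl _
      · exact hi.le
  have h2 := h j
  rw [hsplit, Finset.sum_insert hj, hlt, add_zero] at h2
  exact h2

/-- Lemma 2: if `x 1, …, x n` are pairwise distinct vectors of `ℝ^p`, the
matrix with entries `A i j = Σ_r μ {g ∈ S^{p-1} : x i ⋅ g ≤ x r ⋅ g and
x j ⋅ g ≤ x r ⋅ g}`, where `μ` is the normalized surface (solid angle) measure
on the sphere, is symmetric positive definite. -/
theorem Adot_posDef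
    {n p : ℕ} (hp : 1 ≤ p)
    (x : Fin n → EuclideanSpace ℝ (Fin p))
    (hdist : Function.Injective x)
    (S : Set (EuclideanSpace ℝ (Fin p)))
    (hS : S = Metric.sphere (0 : EuclideanSpace ℝ (Fin p)) 1)
    (μ : Measure (EuclideanSpace ℝ (Fin p)))
    (hμ : μ = ((μH[(p : ℝ) - 1]) S)⁻¹ • (μH[(p : ℝ) - 1]).restrict S)
    (A : Matrix (Fin n) (Fin n) ℝ)
    (hA : ∀ i j, A i j = ∑ r : Fin n,
      (μ {g | ⟪x i, g⟫ ≤ ⟪x r, g⟫ ∧ ⟪x j, g⟫ ≤ ⟪x r, g⟫}).toReal) :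
    A.PosDef := by
  classical
  subst hS hμ
  set S := Metric.sphere (0 : EuclideanSpace ℝ (Fin p)) 1 with hSdef
  set H : Measure (EuclideanSpace ℝ (Fin p)) := μH[(p : ℝ) - 1] with hHdef
  set μ : Measure (EuclideanSpace ℝ (Fin p)) := (H S)⁻¹ • H.restrict S with hμdef
  have hpos : 0 < H S := hausdorff_sphere_pos hp
  have hfin : H S < ∞ := hausdorff_sphere_lt_top hp
  haveI hprob : IsProbabilityMeasure μ := by
    constructor
    rw [hμdef, Measure.smul_apply, smul_eq_mul, Measure.restrict_apply_univ]
    exact ENNReal.inv_mul_cancel hpos.ne' hfin.ne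
  -- null hyperplanes
  have hnull : ∀ v : EuclideanSpace ℝ (Fin p), v ≠ 0 → μ {g | ⟪v, g⟫ = 0} = 0 := by
    intro v hv
    have hm : MeasurableSet {g : EuclideanSpace ℝ (Fin p) | ⟪v, g⟫ = 0} :=
      (isClosed_eq (Continuous.inner continuous_const continuous_id) continuous_const).measurableSet
    rw [hμdef, Measure.smul_apply, Measure.restrict_apply hm, smul_eq_mul]
    have hT : {g : EuclideanSpace ℝ (Fin p) | ⟪v, g⟫ = 0} ∩ S ⊆
        ((ℝ ∙ v)ᗮ : Submodule ℝ (EuclideanSpace ℝ (Fin p))) := fun g hg =>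
      Submodule.mem_orthogonal_singleton_iff_inner_right.mpr hg.1
    rw [hausdorff_sphere_cap_null hp v hv _ hT (fun g hg => hg.2), mul_zero]
  -- the basic sets
  set Es : Fin n → Fin n → Set (EuclideanSpace ℝ (Fin p)) :=
    fun i r => {g | ⟪x i, g⟫ ≤ ⟪x r, g⟫} with hEs
  have hEm : ∀ i r, MeasurableSet (Es i r) := fun i r =>
    (isClosed_le (Continuous.inner continuous_const continuous_id)
      (Continuous.inner continuous_const continuous_id)).measurableSet
  have hAset : ∀ i j r, {g : EuclideanSpace ℝ (Fin p) | ⟪x i, g⟫ ≤ ⟪x r, g⟫ ∧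
      ⟪x j, g⟫ ≤ ⟪x r, g⟫} = Es i r ∩ Es j r := fun i j r => rfl
  have hsymm : ∀ i j, A i j = A j i := by
    intro i j
    rw [hA, hA]
    refine Finset.sum_congr rfl fun r _ => ?_
    have hset : {g : EuclideanSpace ℝ (Fin p) | ⟪x i, g⟫ ≤ ⟪x r, g⟫ ∧ ⟪x j, g⟫ ≤ ⟪x r, g⟫}
        = {g : EuclideanSpace ℝ (Fin p) | ⟪x j, g⟫ ≤ ⟪x r, g⟫ ∧ ⟪x i, g⟫ ≤ ⟪x r, g⟫} := by
      ext g
      exact and_comm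
    rw [hset]
  constructor
  · -- symmetry
    exact Matrix.ext fun i j => by
      rw [Matrix.conjTranspose_apply, star_trivial]
      exact hsymm j i
  · intro c hc
    have hconv : (c.sum fun i xi => c.sum fun j xj => star xi * A i j * xj)
        = dotProduct (star ⇑c) (A.mulVec ⇑c) := by
      simp [Finsupp.sum_fintype, dotProduct, Matrix.mulVec, Finset.mul_sum, mul_assoc]
    rw [hconv]
    -- expand the quadratic form
    set F : Fin n → EuclideanSpace ℝ (Fin p) → ℝ :=
      fun r g => ∑ i, (Es i r).indicator (fun _ => c i) g with hF
    have hFsq : ∀ r g, (F r g)^2 = ∑ i, ∑ j,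
        ((Es i r ∩ Es j r).indicator (fun _ => c i * c j) g) := by
      intro r g
      rw [hF]
      simp only [sq, Finset.sum_mul_sum]
      refine Finset.sum_congr rfl fun i _ => Finset.sum_congr rfl fun j _ => ?_
      rw [Set.inter_indicator_mul]
    have hint : ∀ i j r, Integrable
        ((Es i r ∩ Es j r).indicator (fun _ => c i * c j)) μ :=
      fun i j r => (integrable_const _).indicator ((hEm i r).inter (hEm j r))
    have hIsq : ∀ r, Integrable (fun g => (F r g)^2) μ := by
      intro r
      have : (fun g => (F r g)^2) = fun g => ∑ i, ∑ j,
          ((Es i r ∩ Es j r).indicator (fun _ => c i * c j) g) := funext fun g => hFsq r g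
      rw [this]
      exact integrable_finset_sum _ fun i _ => integrable_finset_sum _ fun j _ => hint i j r
    have hIntF : ∀ r, ∫ g, (F r g)^2 ∂μ = ∑ i, ∑ j,
        c i * c j * (μ (Es i r ∩ Es j r)).toReal := by
      intro r
      simp only [hFsq]
      rw [integral_finset_sum _ fun i _ => integrable_finset_sum _ fun j _ => hint i j r]
      refine Finset.sum_congr rfl fun i _ => ?_
      rw [integral_finset_sum _ fun j _ => hint i j r]
      refine Finset.sum_congr rfl fun j _ => ?_
      rw [integral_indicator_const _ ((hEm i r).inter (hEm j r))]
      rw [smul_eq_mul, measureReal_def]; ring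
    have key : dotProduct (star ⇑c) (A.mulVec ⇑c) = ∑ r, ∫ g, (F r g)^2 ∂μ := by
      have step1 : dotProduct (star ⇑c) (A.mulVec ⇑c)
          = ∑ i, ∑ j, ∑ r, c i * c j * (μ (Es i r ∩ Es j r)).toReal := by
        simp only [dotProduct, Matrix.mulVec, Pi.star_apply, star_trivial, hA, hAset,
          dotProduct, Finset.sum_mul, Finset.mul_sum]
        refine Finset.sum_congr rfl fun i _ => Finset.sum_congr rfl fun j _ =>
          Finset.sum_congr rfl fun r _ => ?_
        ring
      have step2 : (∑ i, ∑ j, ∑ r, c i * c j * (μ (Es i r ∩ Es j r)).toReal : ℝ)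
          = ∑ r, ∑ i, ∑ j, c i * c j * (μ (Es i r ∩ Es j r)).toReal := by
        calc (∑ i, ∑ j, ∑ r, c i * c j * (μ (Es i r ∩ Es j r)).toReal : ℝ)
            = ∑ i, ∑ r, ∑ j, c i * c j * (μ (Es i r ∩ Es j r)).toReal :=
              Finset.sum_congr rfl fun i _ => Finset.sum_comm
          _ = ∑ r, ∑ i, ∑ j, c i * c j * (μ (Es i r ∩ Es j r)).toReal := Finset.sum_comm
      rw [step1, step2]
      exact Finset.sum_congr rfl fun r _ => (hIntF r).symm
    rw [key]
    have hnonneg : ∀ r, 0 ≤ ∫ g, (F r g)^2 ∂μ :=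
      fun r => integral_nonneg fun g => sq_nonneg _
    rcases (Finset.sum_nonneg fun r _ => hnonneg r).lt_or_eq with hlt | heq
    · exact hlt
    · exfalso
      -- each integral is zero, so F r = 0 a.e.
      have hzero : ∀ r : Fin n, ∫ g, (F r g)^2 ∂μ = 0 := by
        intro r
        have := (Finset.sum_eq_zero_iff_of_nonneg (fun r _ => hnonneg r)).mp heq.symm
        exact this r (Finset.mem_univ r)
      have haeF : ∀ r : Fin n, ∀ᵐ g ∂μ, F r g = 0 := by
        intro r
        have h1 := (integral_eq_zero_iff_of_nonneg (fun g => sq_nonneg (F r g)) (hIsq r)).mp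
          (hzero r)
        filter_upwards [h1] with g hg
        have : (F r g)^2 = 0 := hg
        exact pow_eq_zero_iff (by norm_num) |>.mp this
      have haeH : ∀ i j : Fin n, i ≠ j → ∀ᵐ g ∂μ, ⟪x i, g⟫ ≠ ⟪x j, g⟫ := by
        intro i j hij
        have hv : x i - x j ≠ 0 := sub_ne_zero.mpr fun he => hij (hdist he)
        have h0 := hnull (x i - x j) hv
        have hseteq : {g : EuclideanSpace ℝ (Fin p) | ⟪x i - x j, g⟫ = 0}
            = {g : EuclideanSpace ℝ (Fin p) | ⟪x i, g⟫ = ⟪x j, g⟫} := by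
          ext g; simp [inner_sub_left, sub_eq_zero]
        rw [hseteq] at h0
        exact (ae_iff).mpr (by simpa using h0)
      have hae : ∀ᵐ g ∂μ, (∀ r, F r g = 0) ∧ ∀ i j : Fin n, i ≠ j → ⟪x i, g⟫ ≠ ⟪x j, g⟫ := by
        refine ((ae_all_iff).mpr haeF).and ?_
        refine (ae_all_iff).mpr fun i => (ae_all_iff).mpr fun j => ?_
        rcases eq_or_ne i j with rfl | hij
        · simp
        · filter_upwards [haeH i j hij] with g hg
          exact fun _ => hg
      haveI : (ae μ).NeBot := ae_neBot.mpr (IsProbabilityMeasure.ne_zero μ)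
      obtain ⟨g, hg1, hg2⟩ := hae.exists
      set t : Fin n → ℝ := fun i => ⟪x i, g⟫ with htdef
      have tinj : Function.Injective t := by
        intro i j hij
        by_contra hne
        exact hg2 i j hne hij
      have hsum : ∀ r, ∑ i ∈ Finset.univ.filter (fun i => t i ≤ t r), c i = 0 := by
        intro r
        have h1 := hg1 r
        have h2 : F r g = ∑ i ∈ Finset.univ.filter (fun i => t i ≤ t r), c i := by
          rw [hF]
          simp only
          rw [Finset.sum_indicator_eq_sum_filter]
          refine Finset.sum_congr ?_ fun _ _ => rfl
          ext i
          simp [hEs, htdef, Set.mem_setOf_eq]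
        rw [← h2, h1]
      have : c = 0 := Finsupp.ext (comb t tinj c hsum)
      exact hc this

end
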